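/- arXiv:2206.07250 — 2 statements merged into one kernel-verified Lean document; each statement's English description precedes it below -/
import Mathlib

section
/- Let A, J ∈ ℝ^{d×d} be nonsingular and x ∈ ℝ^d with ‖A x‖ > 1 and ‖J x‖ ≤ 1, and let Â be the update matrix for (A, x). Then Φ_J(ÂA) ≤ Φ_J(A); that is, the potential does not increase under the minimum-volume-ellipsoid update. -/
noncomputable section

open scoped Pointwise

/-- `A x`, viewed as a vector in Euclidean space. -/
def mulVecE {d : ℕ} (A : Matrix (Fin d) (Fin d) ℝ) (x : EuclideanSpace ℝ (Fin d)) :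
    EuclideanSpace ℝ (Fin d) :=
  WithLp.toLp 2 (A.mulVec x)

/-- The origin-centered ellipsoid determined by a matrix `A`. -/
def Ellip {d : ℕ} (A : Matrix (Fin d) (Fin d) ℝ) : Set (EuclideanSpace ℝ (Fin d)) :=
  {x | ‖mulVecE A x‖ ≤ 1}

/-- The largest singular value (= Euclidean operator norm) of a matrix. -/
def sMax {d : ℕ} (A : Matrix (Fin d) (Fin d) ℝ) : ℝ :=
  ‖Matrix.toEuclideanCLM (𝕜 := ℝ) A‖

/-- The smallest singular value of a nonsingular matrix. -/
def sMin {d : ℕ} (A : Matrix (Fin d) (Fin d) ℝ) : ℝ :=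
  (sMax A⁻¹)⁻¹

/-- Condition number (aspect ratio of the ellipsoid `Ellip A`). -/
def condNum {d : ℕ} (A : Matrix (Fin d) (Fin d) ℝ) : ℝ :=
  sMax A / sMin A

/-- Squared Frobenius norm. -/
def frobSq {d : ℕ} (A : Matrix (Fin d) (Fin d) ℝ) : ℝ :=
  ∑ i, ∑ j, (A i j) ^ 2

/-- Minimum-volume-ellipsoid update matrix `Â` for `(A, x)`. -/
def updateMatrix {d : ℕ} (A : Matrix (Fin d) (Fin d) ℝ) (x : EuclideanSpace ℝ (Fin d)) :
    Matrix (Fin d) (Fin d) ℝ :=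
  1 - ((1 - (‖mulVecE A x‖)⁻¹) / ‖mulVecE A x‖ ^ 2) •
        Matrix.vecMulVec (mulVecE A x) (mulVecE A x)

/-- Potential function `Φ_J(A)`. -/
def potential {d : ℕ} (J A : Matrix (Fin d) (Fin d) ℝ) : ℝ :=
  frobSq (J * A⁻¹) - 2 * Real.log |(J * A⁻¹).det|

/-- auxiliary: squared norm on Euclidean space. -/
lemma my_norm_sq_eq {d : ℕ} (v : EuclideanSpace ℝ (Fin d)) : ‖v‖ ^ 2 = ∑ i, v i * v i := by
  rw [EuclideanSpace.norm_eq, Real.sq_sqrt (by positivity)]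
  simp_rw [Real.norm_eq_abs, sq_abs, sq]

lemma my_vecMulVec_mul {d : ℕ} (y : Fin d → ℝ) (r2 : ℝ) (h : ∑ k, y k * y k = r2) :
    Matrix.vecMulVec y y * Matrix.vecMulVec y y = r2 • Matrix.vecMulVec y y := by
  ext i j
  simp [Matrix.mul_apply, Matrix.vecMulVec_apply, ← h, Finset.mul_sum, Finset.sum_mul]
  ring_nf
  congr 1; ext k; ring

lemma my_mul_vecMulVec {d : ℕ} (M : Matrix (Fin d) (Fin d) ℝ) (u v : Fin d → ℝ) :
    M * Matrix.vecMulVec u v = Matrix.vecMulVec (M.mulVec u) v := by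
  ext i j
  simp [Matrix.mul_apply, Matrix.vecMulVec_apply, Matrix.mulVec, dotProduct,
    Finset.sum_mul, mul_assoc]

lemma my_det_one_add {d : ℕ} (s : ℝ) (y : Fin d → ℝ) :
    (1 + s • Matrix.vecMulVec y y).det = 1 + s * ∑ k, y k * y k := by
  have h : s • Matrix.vecMulVec y y = Matrix.replicateCol Unit (s • y) * Matrix.replicateRow Unit y := by
    rw [← Matrix.vecMulVec_eq]
    ext i j; simp [Matrix.vecMulVec_apply, mul_assoc]
  rw [h, Matrix.det_one_add_replicateCol_mul_replicateRow]
  simp [dotProduct, Finset.mul_sum]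
  congr 1; ext k; ring

lemma my_frob_expand {d : ℕ} (M : Matrix (Fin d) (Fin d) ℝ) (s : ℝ) (w y : Fin d → ℝ)
    (hw : M.mulVec y = w) :
    frobSq (M + s • Matrix.vecMulVec w y) =
      frobSq M + (2 * s + s ^ 2 * ∑ j, y j * y j) * ∑ i, w i * w i := by
  have key : ∀ i, (∑ j, (M i j + s * (w i * y j)) ^ 2) =
      (∑ j, M i j ^ 2) + (2 * s + s ^ 2 * ∑ j, y j * y j) * (w i * w i) := by
    intro i
    have hwi : ∑ j, M i j * y j = w i := by
      rw [← hw]; rfl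
    have expand : ∀ j, (M i j + s * (w i * y j)) ^ 2 =
        M i j ^ 2 + (2 * s * w i) * (M i j * y j) + (s ^ 2 * (w i * w i)) * (y j * y j) := by
      intro j; ring
    simp_rw [expand, Finset.sum_add_distrib, ← Finset.mul_sum, hwi]
    ring
  simp only [frobSq, Matrix.add_apply, Matrix.smul_apply, Matrix.vecMulVec_apply, smul_eq_mul]
  simp_rw [key, Finset.sum_add_distrib, ← Finset.mul_sum]


/-- The potential `Φ_J` does not increase under the minimum-volume-ellipsoid update. -/
theorem stmt9 (d : ℕ) (A J : Matrix (Fin d) (Fin d) ℝ)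
    (hA : A.det ≠ 0) (hJ : J.det ≠ 0)
    (x : EuclideanSpace ℝ (Fin d)) (hx : 1 < ‖mulVecE A x‖)
    (hJx : ‖mulVecE J x‖ ≤ 1) :
    potential J (updateMatrix A x * A) ≤ potential J A := by
  set r : ℝ := ‖mulVecE A x‖ with hr_def
  have hr1 : 1 < r := hx
  have hr0 : 0 < r := by linarith
  set y : Fin d → ℝ := A.mulVec x with hy_def
  have hyE : (mulVecE A x : Fin d → ℝ) = y := rfl
  have hr2 : ∑ k, y k * y k = r ^ 2 := (my_norm_sq_eq (mulVecE A x)).symm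
  set w : Fin d → ℝ := J.mulVec x with hw_def
  set q : ℝ := ∑ i, w i * w i with hq_def
  have hq0 : 0 ≤ q := Finset.sum_nonneg fun i _ => mul_self_nonneg _
  have hq1 : q ≤ 1 := by
    have : ‖mulVecE J x‖ ^ 2 = q := my_norm_sq_eq (mulVecE J x)
    nlinarith [norm_nonneg (mulVecE J x)]
  set c : ℝ := (1 - r⁻¹) / r ^ 2 with hc_def
  set s : ℝ := (r - 1) / r ^ 2 with hs_def
  set V : Matrix (Fin d) (Fin d) ℝ := Matrix.vecMulVec y y with hV_def
  have hVV : V * V = (r ^ 2) • V := my_vecMulVec_mul y (r ^ 2) hr2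
  have hU : updateMatrix A x = 1 - c • V := rfl
  -- inverse of the update matrix
  have hrne0 : r ≠ 0 := ne_of_gt hr0
  have hmul : (1 - c • V) * (1 + s • V) = 1 := by
    rw [sub_mul, mul_add, mul_add]
    simp only [one_mul, mul_one, smul_mul_assoc, mul_smul_comm, hVV]
    match_scalars
    · norm_num
    · simp only [hc_def, hs_def]
      field_simp
      ring
  have hUinv : (updateMatrix A x)⁻¹ = 1 + s • V := by
    rw [hU]; exact Matrix.inv_eq_right_inv hmul
  have hAunit : IsUnit A.det := isUnit_iff_ne_zero.mpr hA
  have hAinvA : A⁻¹ * A = 1 := Matrix.nonsing_inv_mul A hAunit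
  set M : Matrix (Fin d) (Fin d) ℝ := J * A⁻¹ with hM_def
  have hJA : (J * A⁻¹) * A = J := by rw [mul_assoc, hAinvA, mul_one]
  have hMy : M.mulVec y = w := by
    rw [hM_def, hy_def, hw_def, Matrix.mulVec_mulVec, hJA]
  have h1 : J * (updateMatrix A x * A)⁻¹ = M * (1 + s • V) := by
    rw [Matrix.mul_inv_rev, hUinv, ← mul_assoc]
  have h2 : M * (1 + s • V) = M + s • Matrix.vecMulVec w y := by
    rw [mul_add, mul_one, Matrix.mul_smul, hV_def, my_mul_vecMulVec, hMy]
  have hrne : r ≠ 0 := ne_of_gt hr0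
  have hdetB : (1 + s • V).det = r := by
    rw [hV_def, my_det_one_add, hr2, hs_def]
    field_simp
    ring
  have hMdet : M.det ≠ 0 := by
    rw [hM_def, Matrix.det_mul, Matrix.det_nonsing_inv, Ring.inverse_eq_inv']
    exact mul_ne_zero hJ (inv_ne_zero hA)
  have hfrob : frobSq (J * (updateMatrix A x * A)⁻¹)
      = frobSq M + (2 * s + s ^ 2 * r ^ 2) * q := by
    rw [h1, h2, my_frob_expand M s w y hMy, hr2]
  have hlog : Real.log |(J * (updateMatrix A x * A)⁻¹).det|
      = Real.log |M.det| + Real.log r := by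
    rw [h1, Matrix.det_mul, hdetB, abs_mul, abs_of_pos hr0,
      Real.log_mul (abs_ne_zero.mpr hMdet) hrne]
  rw [potential, potential, hfrob, hlog, ← hM_def]
  -- reduce to the scalar inequality
  have hC : 2 * s + s ^ 2 * r ^ 2 = 1 - (r ^ 2)⁻¹ := by
    rw [hs_def]; field_simp; ring
  have hlog_ineq : Real.log ((r ^ 2)⁻¹) ≤ (r ^ 2)⁻¹ - 1 :=
    Real.log_le_sub_one_of_pos (by positivity)
  have hlogr : Real.log ((r ^ 2)⁻¹) = -(2 * Real.log r) := by
    rw [Real.log_inv, Real.log_pow]; push_cast; ring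
  rw [hlogr] at hlog_ineq
  have hCnn : 0 ≤ 1 - (r ^ 2)⁻¹ := by
    have : (r ^ 2)⁻¹ ≤ 1 := by
      rw [inv_le_one_iff₀]; right; nlinarith
    linarith
  rw [hC]
  nlinarith [mul_le_of_le_one_right hCnn hq1]
end
end

section
/- Let x_1, …, x_n ∈ ℝ^d, let 0 < r ≤ R with ‖x_t‖ ≤ R for all t, and define matrices A_0, A_1, …, A_n recursively by A_0 = (1/r)·I and, for t ≥ 1, A_t = Â_t · A_{t−1} if ‖A_{t−1} x_t‖ > 1 (where Â_t is the update matrix for (A_{t−1}, x_t)) and A_t = A_{t−1} otherwise. Let J ∈ ℝ^{d×d} be nonsingular with ‖J x_t‖ ≤ 1 for all t, 1/R ≤ σ_max(J) ≤ 1/r, and σ_max(J)/σ_min(J) ≤ R/r. Then E_{A_n} ⊆ α · E_J, where α = √( (e/(e−1)) · d · (1 + 4 log(R/r)) ). -/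
noncomputable section

open scoped Pointwise
open scoped Matrix

lemma mulVecE_eq_clm {d : ℕ} (A : Matrix (Fin d) (Fin d) ℝ) (x : EuclideanSpace ℝ (Fin d)) :
    mulVecE A x = Matrix.toEuclideanCLM (𝕜 := ℝ) A x := by
  ext i
  exact (congrFun (Matrix.ofLp_toEuclideanCLM (𝕜 := ℝ) A x) i).symm

lemma norm_mulVecE_le {d : ℕ} (A : Matrix (Fin d) (Fin d) ℝ) (x : EuclideanSpace ℝ (Fin d)) :
    ‖mulVecE A x‖ ≤ sMax A * ‖x‖ := by
  rw [mulVecE_eq_clm]; exact (Matrix.toEuclideanCLM (𝕜 := ℝ) A).le_opNorm x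

lemma norm_sq_eq {d : ℕ} (v : EuclideanSpace ℝ (Fin d)) : ‖v‖ ^ 2 = ∑ i, v i ^ 2 := by
  rw [EuclideanSpace.norm_eq, Real.sq_sqrt (by positivity)]
  simp [sq_abs]

section eig
variable {d : ℕ} (M : Matrix (Fin d) (Fin d) ℝ)

lemma herm : (Mᴴ * M).IsHermitian := (Matrix.posSemidef_conjTranspose_mul_self M).isHermitian

lemma eig_sum : ∑ i, (herm M).eigenvalues i = frobSq M := by
  have h1 : (Mᴴ * M).trace = ∑ i, (herm M).eigenvalues i := by
    conv_lhs => rw [(herm M).spectral_theorem]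
    rw [Unitary.conjStarAlgAut_apply, Matrix.trace_mul_cycle]
    rw [Unitary.coe_star_mul_self, one_mul, Matrix.trace_diagonal]
    simp
  rw [← h1]
  unfold frobSq Matrix.trace
  rw [Finset.sum_comm]
  congr 1; ext j
  simp [Matrix.diag, Matrix.mul_apply, Matrix.conjTranspose_apply, sq]

lemma eig_prod : ∏ i, (herm M).eigenvalues i = M.det ^ 2 := by
  have := (herm M).det_eq_prod_eigenvalues
  simp only [Matrix.det_mul, Matrix.det_conjTranspose, star_trivial,
    RCLike.ofReal_real_eq_id, id_eq] at this
  rw [← this]; ring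

lemma eig_nonneg (i : Fin d) : 0 ≤ (herm M).eigenvalues i :=
  (Matrix.posSemidef_conjTranspose_mul_self M).eigenvalues_nonneg i

lemma eig_pos (h : M.det ≠ 0) (i : Fin d) : 0 < (herm M).eigenvalues i := by
  rcases (eig_nonneg M i).lt_or_eq with h' | h'
  · exact h'
  · exfalso
    have : ∏ j, (herm M).eigenvalues j = 0 :=
      Finset.prod_eq_zero (Finset.mem_univ i) h'.symm
    rw [eig_prod] at this
    exact h (pow_eq_zero_iff two_ne_zero |>.mp this)

lemma eig_le (i : Fin d) : (herm M).eigenvalues i ≤ sMax M ^ 2 := by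
  set v : EuclideanSpace ℝ (Fin d) := (herm M).eigenvectorBasis i with hv
  have hnv : ‖v‖ = 1 := (herm M).eigenvectorBasis.orthonormal.1 i
  have hmv : (Mᴴ * M) *ᵥ ⇑v = (herm M).eigenvalues i • ⇑v :=
    (herm M).mulVec_eigenvectorBasis i
  have key : ⇑v ⬝ᵥ ((Mᴴ * M) *ᵥ ⇑v) = (herm M).eigenvalues i := by
    rw [hmv, dotProduct_smul]
    have : ⇑v ⬝ᵥ ⇑v = ‖v‖ ^ 2 := by rw [norm_sq_eq]; simp [dotProduct, sq]
    rw [this, hnv]; simp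
  have key2 : ⇑v ⬝ᵥ ((Mᴴ * M) *ᵥ ⇑v) = ‖mulVecE M v‖ ^ 2 := by
    rw [norm_sq_eq, ← Matrix.mulVec_mulVec, Matrix.dotProduct_mulVec, Matrix.vecMul_conjTranspose]
    simp only [star_trivial]
    simp only [mulVecE, dotProduct, sq]
  have h3 : ‖mulVecE M v‖ ^ 2 ≤ sMax M ^ 2 := by
    have := norm_mulVecE_le M v
    rw [hnv, mul_one] at this
    exact pow_le_pow_left₀ (norm_nonneg _) this 2
  rw [← key, key2]; exact h3

end eig

-- log x ≤ x / e
lemma log_le_div_e {x : ℝ} (hx : 0 < x) : Real.log x ≤ x / Real.exp 1 := by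
  have h1 : Real.log (x / Real.exp 1) ≤ x / Real.exp 1 - 1 :=
    Real.log_le_sub_one_of_pos (by positivity)
  rw [Real.log_div hx.ne' (Real.exp_pos 1).ne', Real.log_exp] at h1
  linarith

-- 1 - 1/ℓ² ≤ 2 log ℓ for ℓ ≥ 1
lemma one_sub_inv_sq_le {l : ℝ} (hl : 1 ≤ l) : 1 - (l ^ 2)⁻¹ ≤ 2 * Real.log l := by
  have hl0 : (0:ℝ) < l := lt_of_lt_of_le one_pos hl
  have h1 : Real.log ((l ^ 2)⁻¹) ≤ (l ^ 2)⁻¹ - 1 :=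
    Real.log_le_sub_one_of_pos (by positivity)
  rw [Real.log_inv, Real.log_pow] at h1
  push_cast at h1
  linarith

-- 2 log |det M| ≤ frobSq M / e
lemma two_log_det_le {d : ℕ} (M : Matrix (Fin d) (Fin d) ℝ) (h : M.det ≠ 0) :
    2 * Real.log |M.det| ≤ frobSq M / Real.exp 1 := by
  have hH := (Matrix.posSemidef_conjTranspose_mul_self M).isHermitian
  have h1 : 2 * Real.log |M.det| = Real.log (M.det ^ 2) := by
    rw [Real.log_abs, Real.log_pow]; norm_num
  rw [h1, ← eig_prod M,
    Real.log_prod (fun i _ => (eig_pos M h i).ne'), ← eig_sum M,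
    Finset.sum_div]
  exact Finset.sum_le_sum fun i _ => log_le_div_e (eig_pos M h i)

lemma frobSq_le_potential {d : ℕ} (J A : Matrix (Fin d) (Fin d) ℝ)
    (h : (J * A⁻¹).det ≠ 0) :
    frobSq (J * A⁻¹) ≤ Real.exp 1 / (Real.exp 1 - 1) * potential J A := by
  set M := J * A⁻¹
  have he : (1:ℝ) < Real.exp 1 := by
    have := Real.add_one_le_exp 1; linarith
  have h2 := two_log_det_le M h
  have hfe : frobSq M - frobSq M / Real.exp 1 ≤ potential J A := by
    unfold potential; linarith
  have h3 : (0:ℝ) < Real.exp 1 - 1 := by linarith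
  have h4 := mul_le_mul_of_nonneg_left hfe (le_of_lt (div_pos (Real.exp_pos 1) h3))
  have h5 : Real.exp 1 / (Real.exp 1 - 1) * (frobSq M - frobSq M / Real.exp 1) = frobSq M := by
    field_simp
  linarith

lemma abs_det_le_sMax_pow {d : ℕ} (M : Matrix (Fin d) (Fin d) ℝ) :
    |M.det| ≤ sMax M ^ d := by
  have hH := (Matrix.posSemidef_conjTranspose_mul_self M).isHermitian
  have h1 : M.det ^ 2 ≤ (sMax M ^ d) ^ 2 := by
    rw [← eig_prod M]
    calc ∏ i, hH.eigenvalues i ≤ ∏ _i : Fin d, sMax M ^ 2 :=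
          Finset.prod_le_prod (fun i _ => eig_nonneg M i) (fun i _ => eig_le M i)
      _ = (sMax M ^ d) ^ 2 := by rw [Finset.prod_const]; simp [Finset.card_univ]; ring
  have h2 : |M.det| ^ 2 ≤ (sMax M ^ d) ^ 2 := by rwa [sq_abs]
  have hb : 0 ≤ sMax M ^ d := pow_nonneg (norm_nonneg _) d
  nlinarith [abs_nonneg M.det]

lemma vmv_mul_vmv {d : ℕ} (z : Fin d → ℝ) :
    Matrix.vecMulVec z z * Matrix.vecMulVec z z = (z ⬝ᵥ z) • Matrix.vecMulVec z z := by
  ext i j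
  simp only [Matrix.mul_apply, Matrix.vecMulVec_apply, Matrix.smul_apply, dotProduct,
    smul_eq_mul]
  rw [Finset.sum_mul]
  exact Finset.sum_congr rfl fun k _ => by ring

lemma mul_vmv {d : ℕ} (M : Matrix (Fin d) (Fin d) ℝ) (u v : Fin d → ℝ) :
    M * Matrix.vecMulVec u v = Matrix.vecMulVec (M *ᵥ u) v := by
  ext i j
  simp only [Matrix.mul_apply, Matrix.vecMulVec_apply, Matrix.mulVec, dotProduct,
    Finset.sum_mul]
  exact Finset.sum_congr rfl fun k _ => by ring

lemma frobSq_rank_one {d : ℕ} (M : Matrix (Fin d) (Fin d) ℝ) (b : ℝ) (w z : Fin d → ℝ) :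
    frobSq (M + b • Matrix.vecMulVec w z)
      = frobSq M + 2 * b * (w ⬝ᵥ (M *ᵥ z)) + b ^ 2 * (w ⬝ᵥ w) * (z ⬝ᵥ z) := by
  unfold frobSq dotProduct Matrix.mulVec
  simp only [Matrix.add_apply, Matrix.smul_apply, Matrix.vecMulVec_apply, smul_eq_mul,
    dotProduct]
  have e1 : ∀ i j, (M i j + b * (w i * z j)) ^ 2
      = M i j ^ 2 + 2 * b * (w i * (M i j * z j)) + b ^ 2 * ((w i * w i) * (z j * z j)) :=
    fun i j => by ring
  simp only [e1, Finset.sum_add_distrib]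
  congr 1
  · congr 1
    rw [Finset.mul_sum]
    refine Finset.sum_congr rfl fun i _ => ?_
    rw [Finset.mul_sum, Finset.mul_sum]
  · rw [Finset.mul_sum, Finset.sum_comm]
    refine Finset.sum_congr rfl fun j _ => ?_
    rw [Finset.mul_sum, Finset.sum_mul]
    exact Finset.sum_congr rfl fun i _ => by ring

lemma det_one_add_smul_vmv {d : ℕ} (b : ℝ) (z : Fin d → ℝ) :
    (1 + b • Matrix.vecMulVec z z).det = 1 + b * (z ⬝ᵥ z) := by
  have h : b • Matrix.vecMulVec z z = Matrix.vecMulVec (b • z) z := by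
    ext i j; simp [Matrix.vecMulVec_apply]; ring
  rw [h, Matrix.vecMulVec_eq (Fin 1), Matrix.det_one_add_replicateCol_mul_replicateRow]
  rw [dotProduct_smul]
  simp [dotProduct_comm]

lemma step {d : ℕ} (A J : Matrix (Fin d) (Fin d) ℝ) (x : EuclideanSpace ℝ (Fin d))
    (hdet : A.det ≠ 0) (hx : 1 < ‖mulVecE A x‖) (hJ : J.det ≠ 0)
    (hw : ‖mulVecE J x‖ ≤ 1) :
    (updateMatrix A x * A).det ≠ 0 ∧
      potential J (updateMatrix A x * A) ≤ potential J A := by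
  have hAu : IsUnit A.det := isUnit_iff_ne_zero.mpr hdet
  set l : ℝ := ‖mulVecE A x‖ with hl
  have hl1 : 1 < l := hx
  have hl0 : 0 < l := by linarith
  set z : Fin d → ℝ := ⇑(mulVecE A x) with hz
  have hzz : z ⬝ᵥ z = l ^ 2 := by
    rw [hl, norm_sq_eq]
    unfold dotProduct
    exact Finset.sum_congr rfl fun i _ => by rw [sq]
  set b : ℝ := (l - 1) / l ^ 2 with hb
  set c : ℝ := (1 - l⁻¹) / l ^ 2 with hc
  set Z := Matrix.vecMulVec z z with hZdef
  have hupd : updateMatrix A x = 1 - c • Z := rfl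
  have hZZ : Z * Z = (l ^ 2) • Z := by rw [hZdef, vmv_mul_vmv, hzz]
  have hinv1 : (1 - c • Z) * (1 + b • Z) = 1 := by
    have hcb : (c • Z) * (b • Z) = (c * (b * l ^ 2)) • Z := by
      rw [Matrix.smul_mul, Matrix.mul_smul, hZZ, smul_smul, smul_smul, mul_assoc]
    have expand : (1 - c • Z) * (1 + b • Z)
        = 1 + b • Z - (c • Z + (c • Z) * (b • Z)) := by
      rw [sub_mul, one_mul, mul_add, mul_one]
    rw [expand, hcb, ← add_smul, add_sub_assoc, ← sub_smul]
    have hc0 : b - (c + c * (b * l ^ 2)) = 0 := by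
      rw [hb, hc]; field_simp; ring
    rw [hc0, zero_smul, add_zero]
  have hABinv : (updateMatrix A x * A) * (A⁻¹ * (1 + b • Z)) = 1 := by
    calc (updateMatrix A x * A) * (A⁻¹ * (1 + b • Z))
        = updateMatrix A x * (A * A⁻¹) * (1 + b • Z) := by
          rw [mul_assoc, mul_assoc, mul_assoc]
      _ = (1 - c • Z) * (1 + b • Z) := by
          rw [Matrix.mul_nonsing_inv _ hAu, mul_one, hupd]
      _ = 1 := hinv1
  have hdet' : (updateMatrix A x * A).det ≠ 0 := by
    intro h0
    have h1 := congrArg Matrix.det hABinv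
    rw [Matrix.det_mul, h0, zero_mul] at h1
    simp at h1
  refine ⟨hdet', ?_⟩
  have hinv : (updateMatrix A x * A)⁻¹ = A⁻¹ * (1 + b • Z) :=
    Matrix.inv_eq_right_inv hABinv
  set w : Fin d → ℝ := ⇑(mulVecE J x) with hwdef
  have hMz : (J * A⁻¹) *ᵥ z = w := by
    rw [hz]
    show (J * A⁻¹) *ᵥ (A *ᵥ ⇑x) = w
    rw [Matrix.mulVec_mulVec, mul_assoc, Matrix.nonsing_inv_mul _ hAu, mul_one]
    rfl
  have hM' : J * (updateMatrix A x * A)⁻¹ = J * A⁻¹ + b • Matrix.vecMulVec w z := by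
    rw [hinv, ← mul_assoc, mul_add, mul_one, Matrix.mul_smul, hZdef, mul_vmv, hMz]
  have hww : w ⬝ᵥ w = ‖mulVecE J x‖ ^ 2 := by
    rw [norm_sq_eq]
    unfold dotProduct
    exact Finset.sum_congr rfl fun i _ => by rw [sq]
  have hW1 : w ⬝ᵥ w ≤ 1 := by
    rw [hww]; nlinarith [norm_nonneg (mulVecE J x)]
  have hW0 : 0 ≤ w ⬝ᵥ w := by rw [hww]; positivity
  have hfrob : frobSq (J * (updateMatrix A x * A)⁻¹)
      = frobSq (J * A⁻¹) + 2 * b * (w ⬝ᵥ w) + b ^ 2 * (w ⬝ᵥ w) * l ^ 2 := by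
    rw [hM', frobSq_rank_one, hMz, hzz]
  have hdet1Z : (1 + b • Z).det = l := by
    rw [hZdef, det_one_add_smul_vmv, hzz, hb]
    field_simp
    ring
  have hdetM' : (J * (updateMatrix A x * A)⁻¹).det = (J * A⁻¹).det * l := by
    rw [hinv, ← mul_assoc, Matrix.det_mul, hdet1Z]
  have hdetAinv : (A⁻¹).det ≠ 0 := by
    have h1 := congrArg Matrix.det (Matrix.mul_nonsing_inv _ hAu)
    rw [Matrix.det_mul, Matrix.det_one] at h1
    intro h0; rw [h0, mul_zero] at h1; exact zero_ne_one h1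
  have hdetM : (J * A⁻¹).det ≠ 0 := by
    rw [Matrix.det_mul]; exact mul_ne_zero hJ hdetAinv
  have hlog : Real.log |(J * (updateMatrix A x * A)⁻¹).det|
      = Real.log |(J * A⁻¹).det| + Real.log l := by
    rw [hdetM', abs_mul, abs_of_pos hl0,
      Real.log_mul (abs_ne_zero.mpr hdetM) hl0.ne']
  unfold potential
  rw [hfrob, hlog]
  have hcoef2 : 2 * b + b ^ 2 * l ^ 2 = 1 - (l ^ 2)⁻¹ := by
    rw [hb]; field_simp; ring
  have hkey : 2 * b * (w ⬝ᵥ w) + b ^ 2 * (w ⬝ᵥ w) * l ^ 2 ≤ 2 * Real.log l := by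
    have h1 : 2 * b * (w ⬝ᵥ w) + b ^ 2 * (w ⬝ᵥ w) * l ^ 2 = (2 * b + b ^ 2 * l ^ 2) * (w ⬝ᵥ w) := by
      ring
    have h2 : (0:ℝ) ≤ 2 * b + b ^ 2 * l ^ 2 := by
      rw [hcoef2]
      have : (l ^ 2)⁻¹ ≤ 1 := by
        rw [inv_le_one_iff₀]; right; nlinarith
      linarith
    have h3 : (2 * b + b ^ 2 * l ^ 2) * (w ⬝ᵥ w) ≤ (2 * b + b ^ 2 * l ^ 2) * 1 :=
      mul_le_mul_of_nonneg_left hW1 h2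
    rw [h1]
    calc (2 * b + b ^ 2 * l ^ 2) * (w ⬝ᵥ w) ≤ (2 * b + b ^ 2 * l ^ 2) * 1 := h3
      _ = 1 - (l ^ 2)⁻¹ := by rw [mul_one, hcoef2]
      _ ≤ 2 * Real.log l := one_sub_inv_sq_le hl1.le
  linarith

lemma sMax_nonneg {d : ℕ} (A : Matrix (Fin d) (Fin d) ℝ) : 0 ≤ sMax A := norm_nonneg _

set_option synthInstance.maxHeartbeats 1000000 in
lemma sMax_smul {d : ℕ} (c : ℝ) (A : Matrix (Fin d) (Fin d) ℝ) :
    sMax (c • A) = |c| * sMax A := by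
  unfold sMax
  rw [map_smul]
  have h := norm_smul c (Matrix.toEuclideanCLM (𝕜 := ℝ) A)
  rw [Real.norm_eq_abs] at h
  exact h

lemma frobSq_le_card_sMax_sq {d : ℕ} (A : Matrix (Fin d) (Fin d) ℝ) :
    frobSq A ≤ d * sMax A ^ 2 := by
  unfold frobSq
  rw [Finset.sum_comm]
  have hcol : ∀ j : Fin d, ∑ i, A i j ^ 2 ≤ sMax A ^ 2 := by
    intro j
    have h1 : ∑ i, A i j ^ 2 = ‖mulVecE A (EuclideanSpace.single j 1)‖ ^ 2 := by
      rw [norm_sq_eq]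
      refine (Finset.sum_congr rfl fun i _ => ?_).symm
      have : mulVecE A (EuclideanSpace.single j 1) i = A i j := by
        show (A *ᵥ Pi.single j 1) i = A i j
        rw [Matrix.mulVec_single]
        exact mul_one _
      rw [this]
    have h2 := norm_mulVecE_le A (EuclideanSpace.single j 1)
    rw [EuclideanSpace.norm_single, norm_one, mul_one] at h2
    rw [h1]
    exact pow_le_pow_left₀ (norm_nonneg _) h2 2
  calc ∑ j, ∑ i, A i j ^ 2 ≤ ∑ _j : Fin d, sMax A ^ 2 :=
        Finset.sum_le_sum fun j _ => hcol j
    _ = d * sMax A ^ 2 := by rw [Finset.sum_const]; simp [Finset.card_univ]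

lemma initial_potential {d : ℕ} (J : Matrix (Fin d) (Fin d) ℝ) (r R : ℝ)
    (hr : 0 < r) (hrR : r ≤ R) (hJ : J.det ≠ 0)
    (hJ1 : R⁻¹ ≤ sMax J) (hJ2 : sMax J ≤ r⁻¹)
    (hJcond : sMax J / sMin J ≤ R / r) :
    potential J (r⁻¹ • (1 : Matrix (Fin d) (Fin d) ℝ)) ≤ d * (1 + 4 * Real.log (R / r)) := by
  have hR : 0 < R := lt_of_lt_of_le hr hrR
  have hJu : IsUnit J.det := isUnit_iff_ne_zero.mpr hJ
  -- inverse of r⁻¹ • 1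
  have hinv : (r⁻¹ • (1 : Matrix (Fin d) (Fin d) ℝ))⁻¹ = r • (1 : Matrix (Fin d) (Fin d) ℝ) := by
    apply Matrix.inv_eq_right_inv
    rw [Matrix.smul_mul, Matrix.mul_smul, one_mul, smul_smul, inv_mul_cancel₀ hr.ne']
    exact one_smul _ _
  have hM0 : J * (r⁻¹ • (1 : Matrix (Fin d) (Fin d) ℝ))⁻¹ = r • J := by
    rw [hinv, Matrix.mul_smul, mul_one]
  -- Frobenius part
  have hsmaxJ : 0 < sMax J := lt_of_lt_of_le (by positivity) hJ1
  have hfrob : frobSq (r • J) ≤ d := by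
    have h1 : frobSq (r • J) ≤ d * sMax (r • J) ^ 2 := frobSq_le_card_sMax_sq _
    have h2 : sMax (r • J) = r * sMax J := by rw [sMax_smul, abs_of_pos hr]
    have h3 : r * sMax J ≤ 1 := by
      calc r * sMax J ≤ r * r⁻¹ := by
            exact mul_le_mul_of_nonneg_left hJ2 hr.le
        _ = 1 := mul_inv_cancel₀ hr.ne'
    have h4 : sMax (r • J) ^ 2 ≤ 1 := by
      rw [h2]
      nlinarith [mul_nonneg hr.le (sMax_nonneg J)]
    calc frobSq (r • J) ≤ d * sMax (r • J) ^ 2 := h1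
      _ ≤ d * 1 := by
          exact mul_le_mul_of_nonneg_left h4 (Nat.cast_nonneg d)
      _ = d := mul_one _
  -- determinant part
  have hdetrJ : (r • J).det ≠ 0 := by
    rw [Matrix.det_smul]
    exact mul_ne_zero (pow_ne_zero _ hr.ne') hJ
  have hBinv : (r • J) * (r⁻¹ • J⁻¹) = 1 := by
    rw [Matrix.smul_mul, Matrix.mul_smul, smul_smul, mul_inv_cancel₀ hr.ne',
      Matrix.mul_nonsing_inv _ hJu, one_smul]
  have hdetprod : (r • J).det * (r⁻¹ • J⁻¹).det = 1 := by
    rw [← Matrix.det_mul, hBinv, Matrix.det_one]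
  -- bound sMax (r⁻¹ • J⁻¹)
  have hsmaxJinv : sMax J⁻¹ ≤ R ^ 2 / r := by
    have h1 : sMax J * sMax J⁻¹ ≤ R / r := by
      have := hJcond
      unfold sMin at this
      rwa [div_eq_mul_inv, inv_inv] at this
    have h2 : sMax J⁻¹ ≤ (R / r) / sMax J := by
      rw [le_div_iff₀ hsmaxJ, mul_comm]
      exact h1
    calc sMax J⁻¹ ≤ (R / r) / sMax J := h2
      _ ≤ (R / r) / R⁻¹ := by
          apply div_le_div_of_nonneg_left (by positivity) (by positivity) hJ1
      _ = R ^ 2 / r := by field_simp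
  have hsmaxB : sMax (r⁻¹ • J⁻¹) ≤ R ^ 2 / r ^ 2 := by
    rw [sMax_smul, abs_of_pos (inv_pos.mpr hr)]
    calc r⁻¹ * sMax J⁻¹ ≤ r⁻¹ * (R ^ 2 / r) := by
          exact mul_le_mul_of_nonneg_left hsmaxJinv (inv_pos.mpr hr).le
      _ = R ^ 2 / r ^ 2 := by field_simp
  have hdetB : |(r⁻¹ • J⁻¹).det| ≤ (R ^ 2 / r ^ 2) ^ d := by
    calc |(r⁻¹ • J⁻¹).det| ≤ sMax (r⁻¹ • J⁻¹) ^ d := abs_det_le_sMax_pow _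
      _ ≤ (R ^ 2 / r ^ 2) ^ d := pow_le_pow_left₀ (sMax_nonneg _) hsmaxB d
  have habs : |(r • J).det| = |(r⁻¹ • J⁻¹).det|⁻¹ := by
    have h1 : |(r • J).det| * |(r⁻¹ • J⁻¹).det| = 1 := by
      rw [← abs_mul, hdetprod, abs_one]
    rw [mul_comm] at h1
    exact eq_inv_of_mul_eq_one_right h1
  have hlog : -2 * Real.log |(r • J).det| ≤ 4 * d * Real.log (R / r) := by
    have hBpos : 0 < |(r⁻¹ • J⁻¹).det| := by
      rcases eq_or_ne (r⁻¹ • J⁻¹).det 0 with h | h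
      · exfalso; rw [h, mul_zero] at hdetprod; exact zero_ne_one hdetprod
      · exact abs_pos.mpr h
    have h1 : Real.log |(r • J).det| = - Real.log |(r⁻¹ • J⁻¹).det| := by
      rw [habs, Real.log_inv]
    have h2 : Real.log |(r⁻¹ • J⁻¹).det| ≤ Real.log ((R ^ 2 / r ^ 2) ^ d) :=
      Real.log_le_log hBpos hdetB
    have h3 : Real.log ((R ^ 2 / r ^ 2) ^ d) = d * (2 * Real.log (R / r)) := by
      rw [Real.log_pow]
      congr 1
      rw [show R ^ 2 / r ^ 2 = (R / r) ^ 2 by ring, Real.log_pow]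
      push_cast; ring
    rw [h1]
    have := h2.trans_eq h3
    linarith
  unfold potential
  rw [hM0]
  have hcast : (4:ℝ) * d * Real.log (R / r) = d * (4 * Real.log (R / r)) := by ring
  have : frobSq (r • J) - 2 * Real.log |(r • J).det| ≤ d + d * (4 * Real.log (R / r)) := by
    rw [← hcast]; linarith
  calc frobSq (r • J) - 2 * Real.log |(r • J).det| ≤ d + d * (4 * Real.log (R / r)) := this
    _ = d * (1 + 4 * Real.log (R / r)) := by ring


lemma mulVecE_sq_le {d : ℕ} (M : Matrix (Fin d) (Fin d) ℝ) (v : EuclideanSpace ℝ (Fin d)) :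
    ‖mulVecE M v‖ ^ 2 ≤ frobSq M * ‖v‖ ^ 2 := by
  rw [norm_sq_eq, norm_sq_eq]
  unfold frobSq
  rw [Finset.sum_mul]
  refine Finset.sum_le_sum fun i _ => ?_
  have h1 : mulVecE M v i = ∑ j, M i j * v j := rfl
  rw [h1]
  exact Finset.sum_mul_sq_le_sq_mul_sq _ _ _

/-- The scale-dependent streaming algorithm: starting from `A₀ = (1/r)·I` and applying the
minimum-volume-ellipsoid update to each point, the final ellipsoid satisfies
`E_{A_n} ⊆ α • E_J` with `α = √((e/(e−1)) · d · (1 + 4 log (R/r)))`, for every nonsingular `J`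
with `‖J xₜ‖ ≤ 1` for all `t`, `1/R ≤ σ_max J ≤ 1/r` and `σ_max J / σ_min J ≤ R/r`. -/
theorem stmt11 (d n : ℕ) (x : Fin n → EuclideanSpace ℝ (Fin d))
    (r R : ℝ) (hr : 0 < r) (hrR : r ≤ R)
    (hxR : ∀ t, ‖x t‖ ≤ R)
    (A : ℕ → Matrix (Fin d) (Fin d) ℝ)
    (hA0 : A 0 = r⁻¹ • (1 : Matrix (Fin d) (Fin d) ℝ))
    (hAt : ∀ t : Fin n, A ((t : ℕ) + 1) =
      if 1 < ‖mulVecE (A t) (x t)‖ then updateMatrix (A t) (x t) * A t else A t)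
    (J : Matrix (Fin d) (Fin d) ℝ) (hJ : J.det ≠ 0)
    (hJx : ∀ t, ‖mulVecE J (x t)‖ ≤ 1)
    (hJ1 : R⁻¹ ≤ sMax J) (hJ2 : sMax J ≤ r⁻¹)
    (hJcond : sMax J / sMin J ≤ R / r) :
    Ellip (A n) ⊆
      Real.sqrt (Real.exp 1 / (Real.exp 1 - 1) * d * (1 + 4 * Real.log (R / r))) •
        Ellip J := by
  have hR : 0 < R := lt_of_lt_of_le hr hrR
  have hinvar : ∀ t, t ≤ n → (A t).det ≠ 0 ∧ potential J (A t) ≤ potential J (A 0) := by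
    intro t
    induction t with
    | zero =>
        intro _
        refine ⟨?_, le_refl _⟩
        rw [hA0, Matrix.det_smul, Matrix.det_one, mul_one]
        exact pow_ne_zero _ (inv_ne_zero hr.ne')
    | succ t ih =>
        intro ht
        have ht' : t < n := lt_of_lt_of_le (Nat.lt_succ_self t) ht
        obtain ⟨hdet, hpot⟩ := ih (le_of_lt ht')
        have heq : A (t + 1) = (if 1 < ‖mulVecE (A t) (x ⟨t, ht'⟩)‖ then
            updateMatrix (A t) (x ⟨t, ht'⟩) * A t else A t) := hAt ⟨t, ht'⟩
        by_cases hc : 1 < ‖mulVecE (A t) (x ⟨t, ht'⟩)‖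
        · rw [heq, if_pos hc]
          obtain ⟨h1, h2⟩ := step (A t) J (x ⟨t, ht'⟩) hdet hc hJ (hJx ⟨t, ht'⟩)
          exact ⟨h1, h2.trans hpot⟩
        · rw [heq, if_neg hc]; exact ⟨hdet, hpot⟩
  obtain ⟨hdetn, hpotn⟩ := hinvar n le_rfl
  have hinit : potential J (A 0) ≤ d * (1 + 4 * Real.log (R / r)) := by
    rw [hA0]
    exact initial_potential J r R hr hrR hJ hJ1 hJ2 hJcond
  intro y hy
  have hy' : ‖mulVecE (A n) y‖ ≤ 1 := hy
  by_cases hd0 : d = 0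
  · subst hd0
    haveI : Subsingleton (EuclideanSpace ℝ (Fin 0)) :=
      ⟨fun a b => by ext i; exact i.elim0⟩
    have h0 : (0 : EuclideanSpace ℝ (Fin 0)) ∈ Ellip J := by
      show ‖mulVecE J 0‖ ≤ 1
      have hz : mulVecE J (0 : EuclideanSpace ℝ (Fin 0)) = 0 := Subsingleton.elim _ _
      rw [hz, norm_zero]; norm_num
    rw [Set.mem_smul_set]
    exact ⟨0, h0, Subsingleton.elim _ _⟩
  · have hd1 : 1 ≤ (d : ℝ) := by
      exact_mod_cast Nat.one_le_iff_ne_zero.mpr hd0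
    have he1 : (1 : ℝ) < Real.exp 1 := by
      have := Real.add_one_le_exp 1; linarith
    have hlogRr : 0 ≤ Real.log (R / r) :=
      Real.log_nonneg (by rw [le_div_iff₀ hr]; linarith)
    have hargpos : 0 < Real.exp 1 / (Real.exp 1 - 1) * d * (1 + 4 * Real.log (R / r)) := by
      have h1 : 0 < Real.exp 1 / (Real.exp 1 - 1) := div_pos (Real.exp_pos 1) (by linarith)
      have h2 : (0:ℝ) < 1 + 4 * Real.log (R / r) := by linarith
      positivity
    set α : ℝ := Real.sqrt (Real.exp 1 / (Real.exp 1 - 1) * d * (1 + 4 * Real.log (R / r)))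
      with hαdef
    have hαpos : 0 < α := Real.sqrt_pos.mpr hargpos
    have hα2 : α ^ 2 = Real.exp 1 / (Real.exp 1 - 1) * d * (1 + 4 * Real.log (R / r)) :=
      Real.sq_sqrt hargpos.le
    have hdetinv : ((A n)⁻¹).det ≠ 0 := by
      have hAu : IsUnit (A n).det := isUnit_iff_ne_zero.mpr hdetn
      have h1 := congrArg Matrix.det (Matrix.mul_nonsing_inv _ hAu)
      rw [Matrix.det_mul, Matrix.det_one] at h1
      intro h0; rw [h0, mul_zero] at h1; exact zero_ne_one h1
    have hdetM : (J * (A n)⁻¹).det ≠ 0 := by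
      rw [Matrix.det_mul]; exact mul_ne_zero hJ hdetinv
    have hepos : (0:ℝ) ≤ Real.exp 1 / (Real.exp 1 - 1) :=
      (div_pos (Real.exp_pos 1) (by linarith)).le
    have hfM : frobSq (J * (A n)⁻¹) ≤ α ^ 2 := by
      calc frobSq (J * (A n)⁻¹)
          ≤ Real.exp 1 / (Real.exp 1 - 1) * potential J (A n) :=
            frobSq_le_potential J (A n) hdetM
        _ ≤ Real.exp 1 / (Real.exp 1 - 1) * potential J (A 0) :=
            mul_le_mul_of_nonneg_left hpotn hepos
        _ ≤ Real.exp 1 / (Real.exp 1 - 1) * (d * (1 + 4 * Real.log (R / r))) :=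
            mul_le_mul_of_nonneg_left hinit hepos
        _ = α ^ 2 := by rw [hα2]; ring
    have hJyz : mulVecE J y = mulVecE (J * (A n)⁻¹) (mulVecE (A n) y) := by
      show WithLp.toLp 2 (J *ᵥ ⇑y) = WithLp.toLp 2 ((J * (A n)⁻¹) *ᵥ ((A n) *ᵥ ⇑y))
      rw [Matrix.mulVec_mulVec, mul_assoc,
        Matrix.nonsing_inv_mul _ (isUnit_iff_ne_zero.mpr hdetn), mul_one]
    have hJy2 : ‖mulVecE J y‖ ^ 2 ≤ α ^ 2 := by
      rw [hJyz]
      have h1 := mulVecE_sq_le (J * (A n)⁻¹) (mulVecE (A n) y)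
      have h2 : ‖mulVecE (A n) y‖ ^ 2 ≤ 1 := by nlinarith [norm_nonneg (mulVecE (A n) y)]
      have h3 : 0 ≤ frobSq (J * (A n)⁻¹) := by
        unfold frobSq; positivity
      nlinarith
    have hJy : ‖mulVecE J y‖ ≤ α := by
      nlinarith [norm_nonneg (mulVecE J y)]
    rw [Set.mem_smul_set_iff_inv_smul_mem₀ hαpos.ne']
    show ‖mulVecE J (α⁻¹ • y)‖ ≤ 1
    have hsmul : mulVecE J (α⁻¹ • y) = α⁻¹ • mulVecE J y := by
      ext i
      exact congrFun (Matrix.mulVec_smul J α⁻¹ ⇑y) i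
    rw [hsmul, norm_smul, Real.norm_eq_abs, abs_of_pos (inv_pos.mpr hαpos)]
    calc α⁻¹ * ‖mulVecE J y‖ ≤ α⁻¹ * α :=
          mul_le_mul_of_nonneg_left hJy (inv_pos.mpr hαpos).le
      _ = 1 := inv_mul_cancel₀ hαpos.ne'
end
end
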